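/- Let a, b > 0 and give four bodies equal masses μ_1 = μ_2 = μ_3 = μ_4 = μ with 4μ = 1. Then there exist x > 0 and y > 0 such that the points p_1 = (x, y), p_2 = (x, −y), p_3 = (−x, −y), p_4 = (−x, y) satisfy the anisotropic central configuration equations (for every i, a x_i = Σ_{j≠i} μ_j (x_i − x_j)/r_{ij}³ and b y_i = Σ_{j≠i} μ_j (y_i − y_j)/r_{ij}³, where r_{ij} = |p_i − p_j|), i.e. they form a rectangle symmetric with respect to both coordinate axes. Moreover, writing x = r cos φ, y = r sin φ with r = √(x² + y²) and φ ∈ (0, π/2): (1) φ is the unique solution in (0, π/2) of tan³(φ)·(cos³(φ) + 1)/(sin³(φ) + 1) = a/b; (2) r > (μ/(2·min{a,b}))^{1/3}; and (3) in that range r is the unique solution of (μ/(4 a r³ − μ))^{2/3} + (μ/(4 b r³ − μ))^{2/3} = 1. -/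

import Mathlib

open Finset

abbrev E2 : Type := EuclideanSpace ℝ (Fin 2)

/-- The anisotropic central configuration equations for points `p_i = (x_i, y_i)`:
`a x_i = Σ_{j≠i} μ_j (x_i − x_j)/r_{ij}³` and `b y_i = Σ_{j≠i} μ_j (y_i − y_j)/r_{ij}³`. -/
def AnisoCC {k : ℕ} (a b : ℝ) (μ : Fin k → ℝ) (p : Fin k → E2) : Prop :=
  ∀ i, (a * p i 0 = ∑ j ∈ Finset.univ.filter (· ≠ i), μ j * (p i 0 - p j 0) / ‖p i - p j‖ ^ 3) ∧
       (b * p i 1 = ∑ j ∈ Finset.univ.filter (· ≠ i), μ j * (p i 1 - p j 1) / ‖p i - p j‖ ^ 3)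

/-- The point `(a, b)` of the Euclidean plane. -/
noncomputable def pt (a b : ℝ) : E2 := (WithLp.equiv 2 (Fin 2 → ℝ)).symm ![a, b]

/- ### Auxiliary lemmas -/

lemma pt_apply0 (a b : ℝ) : pt a b 0 = a := rfl
lemma pt_apply1 (a b : ℝ) : pt a b 1 = b := rfl
lemma pt_sub (a b c d : ℝ) : pt a b - pt c d = pt (a-c) (b-d) := by
  ext i; fin_cases i <;> rfl
lemma norm_pt (a b : ℝ) : ‖pt a b‖ = Real.sqrt (a^2 + b^2) := by
  rw [EuclideanSpace.norm_eq]
  simp [pt, Fin.sum_univ_two, sq_abs]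

set_option maxHeartbeats 2000000 in
lemma aniso_rect (a b μ x y r : ℝ) (hx : 0 < x) (hy : 0 < y) (hr : 0 < r)
    (hr2 : x^2 + y^2 = r^2)
    (ha' : a = μ/4 * (1/r^3 + 1/x^3))
    (hb' : b = μ/4 * (1/r^3 + 1/y^3)) :
    AnisoCC a b (fun _ : Fin 4 => μ) ![pt x y, pt x (-y), pt (-x) (-y), pt (-x) y] := by
  have key : ∀ u v c : ℝ, 0 < c → u^2 + v^2 = (2*c)^2 → ‖pt u v‖ = 2*c := by
    intro u v c hc h
    rw [norm_pt, h, Real.sqrt_sq (by linarith)]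
  have hx0 : x ≠ 0 := ne_of_gt hx
  have hy0 : y ≠ 0 := ne_of_gt hy
  have hr0 : r ≠ 0 := ne_of_gt hr
  have m1 : ‖pt (x+x) (y+y)‖ = 2*r := key _ _ r hr (by linear_combination 4*hr2)
  have m2 : ‖pt (x+x) 0‖ = 2*x := key _ _ x hx (by ring)
  have m3 : ‖pt 0 (y+y)‖ = 2*y := key _ _ y hy (by ring)
  have m4 : ‖pt (x+x) (-y-y)‖ = 2*r := key _ _ r hr (by linear_combination 4*hr2)
  have m5 : ‖pt 0 (-y-y)‖ = 2*y := key _ _ y hy (by ring)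
  have m6 : ‖pt (-x-x) (-y-y)‖ = 2*r := key _ _ r hr (by linear_combination 4*hr2)
  have m7 : ‖pt (-x-x) 0‖ = 2*x := key _ _ x hx (by ring)
  have m8 : ‖pt (-x-x) (y+y)‖ = 2*r := key _ _ r hr (by linear_combination 4*hr2)
  subst ha' hb'
  intro i
  fin_cases i <;> constructor <;>
  · simp (config := { decide := true }) [Finset.sum_filter, Fin.sum_univ_four, pt_sub,
      pt_apply0, pt_apply1, sub_neg_eq_add]
    simp only [m1, m2, m3, m4, m5, m6, m7, m8]
    field_simp
    ring

lemma cube_lt_cube {s t : ℝ} (hs : 0 ≤ s) (h : s < t) : s^3 < t^3 :=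
  pow_lt_pow_left₀ h hs (by norm_num)

lemma cuberoot_cube {q : ℝ} (hq : 0 ≤ q) : (q ^ ((1:ℝ)/3))^3 = q := by
  rw [← Real.rpow_natCast (q ^ ((1:ℝ)/3)) 3, ← Real.rpow_mul hq]
  norm_num

lemma cube_cuberoot {r : ℝ} (hr : 0 ≤ r) : (r^3) ^ ((1:ℝ)/3) = r := by
  rw [← Real.rpow_natCast r 3, ← Real.rpow_mul hr]
  norm_num

lemma cube_rpow23 {c : ℝ} (hc : 0 ≤ c) : (c^3) ^ ((2:ℝ)/3) = c^2 := by
  rw [← Real.rpow_natCast c 3, ← Real.rpow_mul hc,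
    show ((3:ℕ):ℝ)*((2:ℝ)/3) = ((2:ℕ):ℝ) by norm_num, Real.rpow_natCast]

lemma g_mono : StrictMonoOn
    (fun φ => Real.sin φ^3 * (Real.cos φ^3+1) / (Real.cos φ^3 * (Real.sin φ^3+1)))
    (Set.Ioo 0 (Real.pi/2)) := by
  intro p hp q hq hpq
  obtain ⟨hp0, hp2⟩ := hp; obtain ⟨hq0, hq2⟩ := hq
  have pi_pos := Real.pi_pos
  have hsp : 0 < Real.sin p := Real.sin_pos_of_pos_of_lt_pi hp0 (by linarith)
  have hsq : 0 < Real.sin q := Real.sin_pos_of_pos_of_lt_pi hq0 (by linarith)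
  have hcp : 0 < Real.cos p := Real.cos_pos_of_mem_Ioo ⟨by linarith, hp2⟩
  have hcq : 0 < Real.cos q := Real.cos_pos_of_mem_Ioo ⟨by linarith, hq2⟩
  have hs : Real.sin p < Real.sin q :=
    Real.strictMonoOn_sin ⟨by linarith, by linarith⟩ ⟨by linarith, by linarith⟩ hpq
  have hc : Real.cos q < Real.cos p :=
    Real.strictAntiOn_cos ⟨by linarith, by linarith⟩ ⟨by linarith, by linarith⟩ hpq
  have hs3 : Real.sin p^3 < Real.sin q^3 := cube_lt_cube hsp.le hs
  have hc3 : Real.cos q^3 < Real.cos p^3 := cube_lt_cube hcq.le hc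
  have hu1 : 0 < Real.sin p^3 := by positivity
  have hu2 : 0 < Real.sin q^3 := by positivity
  have hv1 : 0 < Real.cos p^3 := by positivity
  have hv2 : 0 < Real.cos q^3 := by positivity
  simp only
  rw [div_lt_div_iff₀ (by positivity) (by positivity)]
  nlinarith [mul_pos (mul_pos hu1 hu2) (sub_pos.2 hc3), mul_pos (mul_pos hv1 hv2) (sub_pos.2 hs3),
    mul_pos (sub_pos.2 hs3) hv2, mul_pos hu2 (sub_pos.2 hc3)]

lemma f_eq_g {φ : ℝ} (hφ : φ ∈ Set.Ioo 0 (Real.pi/2)) :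
    Real.tan φ ^ 3 * ((Real.cos φ ^ 3 + 1) / (Real.sin φ ^ 3 + 1)) =
    Real.sin φ^3 * (Real.cos φ^3+1) / (Real.cos φ^3 * (Real.sin φ^3+1)) := by
  have pi_pos := Real.pi_pos
  have hs : 0 < Real.sin φ := Real.sin_pos_of_pos_of_lt_pi hφ.1 (by linarith [hφ.2])
  have hc : 0 < Real.cos φ := Real.cos_pos_of_mem_Ioo ⟨by linarith [hφ.1], hφ.2⟩
  rw [Real.tan_eq_sin_div_cos]
  have h1 : Real.sin φ^3 + 1 > 0 := by positivity
  field_simp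

lemma phi_exists (c : ℝ) (hc : 0 < c) :
    ∃ φ ∈ Set.Ioo 0 (Real.pi/2),
      Real.tan φ ^ 3 * ((Real.cos φ ^ 3 + 1) / (Real.sin φ ^ 3 + 1)) = c := by
  have pi_pos := Real.pi_pos
  set t1 := min 1 (c/4) with ht1def
  set t2 := max 2 (4*c) with ht2def
  have ht1 : 0 < t1 := lt_min one_pos (by positivity)
  have ht1le : t1 ≤ 1 := min_le_left _ _
  have ht1lec : t1 ≤ c/4 := min_le_right _ _
  have ht2 : 2 ≤ t2 := le_max_left _ _
  have ht2c : 4*c ≤ t2 := le_max_right _ _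
  set φ1 := Real.arctan t1 with hφ1def
  set φ2 := Real.arctan t2 with hφ2def
  have hφ1pos : 0 < φ1 := by
    have := Real.arctan_strictMono ht1
    rwa [Real.arctan_zero] at this
  have hφ2lt : φ2 < Real.pi/2 := Real.arctan_lt_pi_div_two _
  have hφ12 : φ1 < φ2 := Real.arctan_strictMono (by linarith)
  have hsub : Set.Icc φ1 φ2 ⊆ Set.Ioo 0 (Real.pi/2) := fun ξ hξ =>
    ⟨lt_of_lt_of_le hφ1pos hξ.1, lt_of_le_of_lt hξ.2 hφ2lt⟩
  have hcont : ContinuousOn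
      (fun φ => Real.tan φ ^ 3 * ((Real.cos φ ^ 3 + 1) / (Real.sin φ ^ 3 + 1)))
      (Set.Icc φ1 φ2) := by
    apply ContinuousOn.mul
    · apply ContinuousOn.pow
      intro ξ hξ
      have hc' : Real.cos ξ ≠ 0 := by
        have := hsub hξ
        exact (Real.cos_pos_of_mem_Ioo ⟨by linarith [this.1], this.2⟩).ne'
      exact (Real.continuousAt_tan.2 hc').continuousWithinAt
    · apply ContinuousOn.div (by fun_prop) (by fun_prop)
      intro ξ hξ
      have := hsub hξ
      have hs : 0 < Real.sin ξ := Real.sin_pos_of_pos_of_lt_pi this.1 (by linarith [this.2])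
      positivity
  have hbound : ∀ t : ℝ, 0 < t →
      Real.tan (Real.arctan t) ^ 3 *
        ((Real.cos (Real.arctan t) ^ 3 + 1) / (Real.sin (Real.arctan t) ^ 3 + 1))
      ∈ Set.Icc (t^3/2) (2*t^3) := by
    intro t ht
    have harc : 0 < Real.arctan t := by
      have := Real.arctan_strictMono ht
      rwa [Real.arctan_zero] at this
    have harc2 : Real.arctan t < Real.pi/2 := Real.arctan_lt_pi_div_two _
    have hcos : 0 < Real.cos (Real.arctan t) := Real.cos_pos_of_mem_Ioo ⟨by linarith, harc2⟩
    have hsin : 0 < Real.sin (Real.arctan t) := Real.sin_pos_of_pos_of_lt_pi harc (by linarith)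
    have hcos1 : Real.cos (Real.arctan t) ≤ 1 := Real.cos_le_one _
    have hsin1 : Real.sin (Real.arctan t) ≤ 1 := Real.sin_le_one _
    have hc3 : Real.cos (Real.arctan t)^3 ≤ 1 := pow_le_one₀ hcos.le hcos1
    have hs3 : Real.sin (Real.arctan t)^3 ≤ 1 := pow_le_one₀ hsin.le hsin1
    have hc3p : 0 < Real.cos (Real.arctan t)^3 := by positivity
    have hs3p : 0 < Real.sin (Real.arctan t)^3 := by positivity
    rw [Real.tan_arctan]
    have hBlo : (1:ℝ)/2 ≤ (Real.cos (Real.arctan t) ^ 3 + 1) / (Real.sin (Real.arctan t) ^ 3 + 1) := by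
      rw [le_div_iff₀ (by positivity)]; nlinarith
    have hBhi : (Real.cos (Real.arctan t) ^ 3 + 1) / (Real.sin (Real.arctan t) ^ 3 + 1) ≤ 2 := by
      rw [div_le_iff₀ (by positivity)]; nlinarith
    have ht3 : 0 < t^3 := by positivity
    constructor
    · calc t^3/2 = t^3 * (1/2) := by ring
        _ ≤ _ := by apply mul_le_mul_of_nonneg_left hBlo ht3.le
    · calc t^3 * ((Real.cos (Real.arctan t) ^ 3 + 1) / (Real.sin (Real.arctan t) ^ 3 + 1))
          ≤ t^3 * 2 := mul_le_mul_of_nonneg_left hBhi ht3.le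
        _ = 2*t^3 := by ring
  have h1 := hbound t1 ht1
  have h2 := hbound t2 (by linarith)
  have ht1cube : t1^3 ≤ t1 := by
    nlinarith [mul_nonneg (mul_nonneg ht1.le (sub_nonneg.2 ht1le)) (by linarith : (0:ℝ) ≤ 1+t1)]
  have ht2cube : t2 ≤ t2^3 := by
    nlinarith [mul_nonneg (mul_nonneg (by linarith : (0:ℝ) ≤ t2) (by linarith : (0:ℝ) ≤ t2-1))
      (by linarith : (0:ℝ) ≤ t2+1)]
  have hf1 : Real.tan φ1 ^ 3 * ((Real.cos φ1 ^ 3 + 1) / (Real.sin φ1 ^ 3 + 1)) < c := by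
    have := h1.2
    have : 2*t1^3 ≤ 2*t1 := by linarith
    have : 2*t1 ≤ c/2 := by linarith
    linarith [h1.2]
  have hf2 : c < Real.tan φ2 ^ 3 * ((Real.cos φ2 ^ 3 + 1) / (Real.sin φ2 ^ 3 + 1)) := by
    have : 2*c ≤ t2^3/2 := by linarith
    have hcpos := hc
    linarith [h2.1]
  obtain ⟨φ, hφmem, hφval⟩ := intermediate_value_Ioo hφ12.le hcont ⟨hf1, hf2⟩
  exact ⟨φ, ⟨lt_trans hφ1pos hφmem.1, lt_trans hφmem.2 hφ2lt⟩, hφval⟩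

set_option maxHeartbeats 2000000 in
/-- for `a, b > 0` and four equal masses `μ = 1/4`, there is an anisotropic
central configuration forming a rectangle `(±x, ±y)` symmetric with respect to both
coordinate axes; writing `x = r cos φ`, `y = r sin φ` with `φ ∈ (0, π/2)`, the angle `φ`
is the unique solution in `(0, π/2)` of `tan³φ (cos³φ + 1)/(sin³φ + 1) = a/b`, the
half-diagonal `r` satisfies `r > (μ/(2 min{a,b}))^{1/3}`, and in that range `r` is the
unique solution of `(μ/(4ar³−μ))^{2/3} + (μ/(4br³−μ))^{2/3} = 1`. -/
theorem stmt18 (a b μ : ℝ) (ha : 0 < a) (hb : 0 < b) (hμ : 0 < μ) (hμ1 : 4 * μ = 1) :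
    ∃ x > (0 : ℝ), ∃ y > (0 : ℝ),
      AnisoCC a b (fun _ : Fin 4 => μ) ![pt x y, pt x (-y), pt (-x) (-y), pt (-x) y] ∧
      ∃ r > (0 : ℝ), ∃ φ ∈ Set.Ioo (0 : ℝ) (Real.pi / 2),
        x = r * Real.cos φ ∧ y = r * Real.sin φ ∧
        (Real.tan φ ^ 3 * ((Real.cos φ ^ 3 + 1) / (Real.sin φ ^ 3 + 1)) = a / b ∧
          ∀ φ' ∈ Set.Ioo (0 : ℝ) (Real.pi / 2),
            Real.tan φ' ^ 3 * ((Real.cos φ' ^ 3 + 1) / (Real.sin φ' ^ 3 + 1)) = a / b →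
            φ' = φ) ∧
        ((μ / (2 * min a b)) ^ ((1 : ℝ) / 3) < r ∧
          (μ / (4 * a * r ^ 3 - μ)) ^ ((2 : ℝ) / 3) +
            (μ / (4 * b * r ^ 3 - μ)) ^ ((2 : ℝ) / 3) = 1 ∧
          ∀ r' : ℝ, (μ / (2 * min a b)) ^ ((1 : ℝ) / 3) < r' →
            (μ / (4 * a * r' ^ 3 - μ)) ^ ((2 : ℝ) / 3) +
              (μ / (4 * b * r' ^ 3 - μ)) ^ ((2 : ℝ) / 3) = 1 →
            r' = r) := by
  clear hμ1
  have pi_pos := Real.pi_pos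
  obtain ⟨φ, hφmem, hfφ⟩ := phi_exists (a/b) (by positivity)
  obtain ⟨hφ0, hφ2⟩ := hφmem
  have hsφ : 0 < Real.sin φ := Real.sin_pos_of_pos_of_lt_pi hφ0 (by linarith)
  have hcφ : 0 < Real.cos φ := Real.cos_pos_of_mem_Ioo ⟨by linarith, hφ2⟩
  have hsc : Real.sin φ^2 + Real.cos φ^2 = 1 := Real.sin_sq_add_cos_sq φ
  have hslt : Real.sin φ < 1 := by nlinarith
  have hclt : Real.cos φ < 1 := by nlinarith
  have hs3 : 0 < Real.sin φ^3 := by positivity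
  have hc3 : 0 < Real.cos φ^3 := by positivity
  have hs3lt : Real.sin φ^3 < 1 := by nlinarith
  have hc3lt : Real.cos φ^3 < 1 := by nlinarith
  have hg : Real.sin φ^3 * (Real.cos φ^3+1) / (Real.cos φ^3 * (Real.sin φ^3+1)) = a/b := by
    rw [← f_eq_g ⟨hφ0, hφ2⟩]; exact hfφ
  have hcross : b * (Real.sin φ^3*(Real.cos φ^3+1)) = a * (Real.cos φ^3*(Real.sin φ^3+1)) := by
    rw [div_eq_div_iff (by positivity) hb.ne'] at hg
    linarith
  set Q := μ*(Real.cos φ^3+1)/(4*a*Real.cos φ^3) with hQdef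
  have hQ : 0 < Q := by positivity
  set r := Q ^ ((1:ℝ)/3) with hrdef
  have hr : 0 < r := Real.rpow_pos_of_pos hQ _
  have hr3 : r^3 = Q := cuberoot_cube hQ.le
  have hra : 4*a*r^3*Real.cos φ^3 = μ*(Real.cos φ^3+1) := by
    rw [hr3, hQdef]; field_simp
  have hrb : 4*b*r^3*Real.sin φ^3 = μ*(Real.sin φ^3+1) := by
    apply mul_right_cancel₀ (show Real.cos φ^3+1 ≠ 0 by positivity)
    linear_combination 4*r^3*hcross + (Real.sin φ^3+1)*hra
  clear_value Q r
  have ha' : a = μ/4 * (1/r^3 + 1/(r*Real.cos φ)^3) := by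
    field_simp
    linear_combination hra
  have hb' : b = μ/4 * (1/r^3 + 1/(r*Real.sin φ)^3) := by
    field_simp
    linear_combination hrb
  have hr2 : (r*Real.cos φ)^2 + (r*Real.sin φ)^2 = r^2 := by
    linear_combination r^2 * hsc
  have hm : 0 < min a b := lt_min ha hb
  have hr3b : r^3 = μ*(Real.sin φ^3+1)/(4*b*Real.sin φ^3) := by
    field_simp
    linear_combination hrb
  have hrgt3 : μ/(2*min a b) < r^3 := by
    rcases le_total a b with hab|hab
    · rw [min_eq_left hab, hr3, hQdef, div_lt_div_iff₀ (by positivity) (by positivity)]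
      nlinarith [mul_pos (mul_pos hμ ha) (sub_pos.2 hc3lt)]
    · rw [min_eq_right hab, hr3b, div_lt_div_iff₀ (by positivity) (by positivity)]
      nlinarith [mul_pos (mul_pos hμ hb) (sub_pos.2 hs3lt)]
  have hrgt : (μ/(2*min a b)) ^ ((1:ℝ)/3) < r := by
    calc (μ/(2*min a b)) ^ ((1:ℝ)/3) < (r^3) ^ ((1:ℝ)/3) :=
          Real.rpow_lt_rpow (by positivity) hrgt3 (by norm_num)
      _ = r := cube_cuberoot hr.le
  have hda : 4*a*r^3 - μ = μ/Real.cos φ^3 := by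
    field_simp
    linear_combination hra
  have hdb : 4*b*r^3 - μ = μ/Real.sin φ^3 := by
    field_simp
    linear_combination hrb
  have hA : μ/(4*a*r^3-μ) = Real.cos φ^3 := by
    rw [hda, div_div_eq_mul_div, mul_comm, mul_div_assoc, div_self hμ.ne', mul_one]
  have hB : μ/(4*b*r^3-μ) = Real.sin φ^3 := by
    rw [hdb, div_div_eq_mul_div, mul_comm, mul_div_assoc, div_self hμ.ne', mul_one]
  have hreq : (μ / (4*a*r^3 - μ)) ^ ((2:ℝ)/3) + (μ / (4*b*r^3 - μ)) ^ ((2:ℝ)/3) = 1 := by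
    rw [hA, hB, cube_rpow23 hcφ.le, cube_rpow23 hsφ.le]
    linarith
  have hden : ∀ z : ℝ, (μ/(2*min a b)) ^ ((1:ℝ)/3) < z →
      (0 < z ∧ μ < 4*a*z^3 - μ ∧ μ < 4*b*z^3 - μ) := by
    intro z hz
    have h0 : 0 < z := lt_trans (Real.rpow_pos_of_pos (by positivity) _) hz
    have hz3 : μ/(2*min a b) < z^3 := by
      calc μ/(2*min a b) = ((μ/(2*min a b)) ^ ((1:ℝ)/3))^3 := (cuberoot_cube (by positivity)).symm
        _ < z^3 := cube_lt_cube (by positivity) hz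
    have h1 : μ < 2*min a b*z^3 := by
      rw [div_lt_iff₀ (by positivity)] at hz3; linarith
    refine ⟨h0, ?_, ?_⟩
    · nlinarith [min_le_left a b, pow_pos h0 3]
    · nlinarith [min_le_right a b, pow_pos h0 3]
  have hanti : ∀ s t : ℝ, (μ/(2*min a b)) ^ ((1:ℝ)/3) < s → s < t →
      (μ / (4*a*t^3 - μ)) ^ ((2:ℝ)/3) + (μ / (4*b*t^3 - μ)) ^ ((2:ℝ)/3) <
      (μ / (4*a*s^3 - μ)) ^ ((2:ℝ)/3) + (μ / (4*b*s^3 - μ)) ^ ((2:ℝ)/3) := by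
    intro s t hs hst
    obtain ⟨hs0, hsa, hsb⟩ := hden s hs
    obtain ⟨ht0, hta, htb⟩ := hden t (hs.trans hst)
    have h3 : s^3 < t^3 := cube_lt_cube hs0.le hst
    have h3a : 4*a*s^3 < 4*a*t^3 := by
      have := mul_lt_mul_of_pos_left h3 (show (0:ℝ) < 4*a by linarith)
      linarith
    have h3b : 4*b*s^3 < 4*b*t^3 := by
      have := mul_lt_mul_of_pos_left h3 (show (0:ℝ) < 4*b by linarith)
      linarith
    have e1 : μ/(4*a*t^3-μ) < μ/(4*a*s^3-μ) :=
      div_lt_div_of_pos_left hμ (by linarith) (by linarith)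
    have e2 : μ/(4*b*t^3-μ) < μ/(4*b*s^3-μ) :=
      div_lt_div_of_pos_left hμ (by linarith) (by linarith)
    exact add_lt_add
      (Real.rpow_lt_rpow (le_of_lt (div_pos hμ (by linarith))) e1 (by norm_num))
      (Real.rpow_lt_rpow (le_of_lt (div_pos hμ (by linarith))) e2 (by norm_num))
  refine ⟨r*Real.cos φ, by positivity, r*Real.sin φ, by positivity,
    aniso_rect a b μ _ _ r (by positivity) (by positivity) hr hr2 ha' hb',
    r, hr, φ, ⟨hφ0, hφ2⟩, rfl, rfl, ⟨hfφ, ?_⟩, hrgt, hreq, ?_⟩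
  · intro φ' hφ' heq
    refine g_mono.injOn hφ' ⟨hφ0, hφ2⟩ ?_
    show Real.sin φ'^3 * (Real.cos φ'^3+1) / (Real.cos φ'^3 * (Real.sin φ'^3+1)) =
      Real.sin φ^3 * (Real.cos φ^3+1) / (Real.cos φ^3 * (Real.sin φ^3+1))
    rw [← f_eq_g hφ', ← f_eq_g ⟨hφ0, hφ2⟩, heq, hfφ]
  · intro r' hr' heq'
    rcases lt_trichotomy r' r with h|h|h
    · have := hanti r' r hr' h
      rw [heq', hreq] at this
      exact absurd this (lt_irrefl 1)
    · exact h
    · have := hanti r r' hrgt h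
      rw [heq', hreq] at this
      exact absurd this (lt_irrefl 1)
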